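/- Let f : 2^ω → ℝ be a Baire 1 function with |f|_α = ν + 1 a successor ordinal. Then there exists a maximal pair for f, i.e., rationals p and ε with ε > 0 such that α(f,p,ε) = ν + 1 and f(P^ν_{f,p,ε}) is not contained in (p−ε, p+ε). -/

import Mathlib

/-- Cantor space `2^ω`. -/
abbrev Cantor : Type := ℕ → Bool

/-- A bit `b` is a correct answer to the question `f A ≲_ε p`. -/
def CorrectAnswer (f : Cantor → ℝ) (A : Cantor) (p ε : ℚ) (b : Bool) : Prop :=
  (b = true ∧ f A < (p : ℝ) + (ε : ℝ)) ∨ (b = false ∧ (p : ℝ) - (ε : ℝ) < f A)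

/-- Topological m-reducibility `f ≤_m g`. -/
def MReducible (f g : Cantor → ℝ) : Prop :=
  ∀ p ε : ℚ, 0 < ε → ∃ q δ : ℚ, 0 < δ ∧ ∃ k : Cantor → Cantor, Continuous k ∧
    ∀ A b, CorrectAnswer g (k A) q δ b → CorrectAnswer f A p ε b

/-- `f` is Baire class 1: a pointwise limit of continuous functions. -/
def BaireOne (f : Cantor → ℝ) : Prop :=
  ∃ F : ℕ → Cantor → ℝ, (∀ n, Continuous (F n)) ∧
    ∀ A, Filter.Tendsto (fun n => F n A) Filter.atTop (nhds (f A))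

/-- The Bourgain derivation sequence `P^ν_{f,p,ε}`. -/
noncomputable def derivSeq (f : Cantor → ℝ) (p ε : ℚ) (ν : Ordinal.{0}) : Set Cantor :=
  Ordinal.limitRecOn ν Set.univ
    (fun _ P => P \ ⋃₀ {U : Set Cantor | IsOpen U ∧
        (f '' (P ∩ U) ⊆ Set.Iio ((p : ℝ) + (ε : ℝ)) ∨
         f '' (P ∩ U) ⊆ Set.Ioi ((p : ℝ) - (ε : ℝ)))})
    (fun o _ ih => ⋂ (μ : {μ : Ordinal.{0} // μ < o}), ih μ.1 μ.2)

/-- `α(f,p,ε)`: the least ordinal `ν` with `P^ν_{f,p,ε} = ∅`. -/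
noncomputable def bAlpha (f : Cantor → ℝ) (p ε : ℚ) : Ordinal.{0} :=
  sInf {ν | derivSeq f p ε ν = ∅}

/-- The Bourgain rank `|f|_α`. -/
noncomputable def bourgainRank (f : Cantor → ℝ) : Ordinal.{0} :=
  ⨆ x : ℚ × {ε : ℚ // 0 < ε}, bAlpha f x.1 x.2.1

/-- `(p,ε)` is a maximal pair for `f` (with `|f|_α = ν + 1`):
`α(f,p,ε) = ν + 1` and `f(P^ν_{f,p,ε}) ⊄ (p-ε, p+ε)`. -/
def IsMaximalPair (f : Cantor → ℝ) (ν : Ordinal) (p ε : ℚ) : Prop :=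
  0 < ε ∧ bAlpha f p ε = ν + 1 ∧
    ¬ (f '' derivSeq f p ε ν ⊆ Set.Ioo ((p : ℝ) - (ε : ℝ)) ((p : ℝ) + (ε : ℝ)))

/-- `f` (with `|f|_α = ν + 1`) is two-sided. -/
def TwoSided (f : Cantor → ℝ) (ν : Ordinal) : Prop :=
  ∃ p ε : ℚ, IsMaximalPair f ν p ε ∧
    ¬ (f '' derivSeq f p ε ν ⊆ Set.Ioi ((p : ℝ) - (ε : ℝ))) ∧
    ¬ (f '' derivSeq f p ε ν ⊆ Set.Iio ((p : ℝ) + (ε : ℝ)))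

/-- `f` (with `|f|_α = ν + 1`) is one-sided. -/
def OneSided (f : Cantor → ℝ) (ν : Ordinal) : Prop := ¬ TwoSided f ν

/-- `f` (with `|f|_α = ν + 1`) is left-sided. -/
def LeftSided (f : Cantor → ℝ) (ν : Ordinal) : Prop :=
  ∀ p ε : ℚ, IsMaximalPair f ν p ε → f '' derivSeq f p ε ν ⊆ Set.Iio ((p : ℝ) + (ε : ℝ))

/-- `f` (with `|f|_α = ν + 1`) is right-sided. -/
def RightSided (f : Cantor → ℝ) (ν : Ordinal) : Prop :=
  ∀ p ε : ℚ, IsMaximalPair f ν p ε → f '' derivSeq f p ε ν ⊆ Set.Ioi ((p : ℝ) - (ε : ℝ))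

def Rem (f : Cantor → ℝ) (p ε : ℚ) (P : Set Cantor) : Set Cantor :=
  ⋃₀ {U : Set Cantor | IsOpen U ∧
        (f '' (P ∩ U) ⊆ Set.Iio ((p : ℝ) + (ε : ℝ)) ∨
         f '' (P ∩ U) ⊆ Set.Ioi ((p : ℝ) - (ε : ℝ)))}

theorem derivSeq_zero (f p ε) : derivSeq f p ε 0 = Set.univ := by
  simp [derivSeq]

theorem derivSeq_succ' (f p ε o) :
    derivSeq f p ε (Order.succ o) = derivSeq f p ε o \ Rem f p ε (derivSeq f p ε o) := by
  rw [derivSeq, Ordinal.limitRecOn_succ]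
  rfl

theorem derivSeq_succ (f p ε o) :
    derivSeq f p ε (o + 1) = derivSeq f p ε o \ Rem f p ε (derivSeq f p ε o) := by
  rw [Ordinal.add_one_eq_succ, derivSeq_succ']

theorem derivSeq_limit (f p ε) {o} (ho : Order.IsSuccLimit o) :
    derivSeq f p ε o = ⋂ (μ : {μ : Ordinal.{0} // μ < o}), derivSeq f p ε μ.1 := by
  rw [derivSeq, Ordinal.limitRecOn_limit _ _ _ _ ho]
  rfl

theorem derivSeq_isClosed (f p ε) (o : Ordinal.{0}) : IsClosed (derivSeq f p ε o) := by
  induction o using Ordinal.induction with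
  | _ o ih =>
    rcases Ordinal.zero_or_succ_or_isSuccLimit o with h | ⟨a, rfl⟩ | h
    · subst h; rw [derivSeq_zero]; exact isClosed_univ
    · rw [derivSeq_succ']
      have : IsOpen (Rem f p ε (derivSeq f p ε a)) :=
        isOpen_sUnion (fun U hU => hU.1)
      exact (ih a (Order.lt_succ a)).sdiff this
    · rw [derivSeq_limit f p ε h]
      exact isClosed_iInter (fun μ => ih μ.1 μ.2)

theorem derivSeq_anti (f p ε) : ∀ o' o : Ordinal.{0}, o ≤ o' →
    derivSeq f p ε o' ⊆ derivSeq f p ε o := by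
  intro o'
  induction o' using Ordinal.induction with
  | _ o' ih =>
    intro o ho
    rcases eq_or_lt_of_le ho with rfl | ho
    · exact subset_rfl
    rcases Ordinal.zero_or_succ_or_isSuccLimit o' with h | ⟨a, rfl⟩ | h
    · exact absurd (h ▸ ho) (not_lt_zero (a := o))
    · rw [derivSeq_succ']
      exact (Set.diff_subset).trans (ih a (Order.lt_succ a) o (Order.lt_succ_iff.mp ho))
    · rw [derivSeq_limit f p ε h]
      exact Set.iInter_subset_of_subset ⟨o, ho⟩ subset_rfl

theorem derivSeq_mono (f) {p ε p' ε' : ℚ}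
    (h1 : (p' : ℝ) + (ε' : ℝ) ≤ (p : ℝ) + (ε : ℝ))
    (h2 : (p : ℝ) - (ε : ℝ) ≤ (p' : ℝ) - (ε' : ℝ)) :
    ∀ o : Ordinal.{0}, derivSeq f p ε o ⊆ derivSeq f p' ε' o := by
  intro o
  induction o using Ordinal.induction with
  | _ o ih =>
    rcases Ordinal.zero_or_succ_or_isSuccLimit o with h | ⟨a, rfl⟩ | h
    · subst h; rw [derivSeq_zero, derivSeq_zero]
    · rw [derivSeq_succ', derivSeq_succ']
      rintro x ⟨hx, hx2⟩
      refine ⟨ih a (Order.lt_succ a) hx, ?_⟩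
      rintro ⟨U, ⟨hUo, hUsm⟩, hxU⟩
      refine hx2 ⟨U, ⟨hUo, ?_⟩, hxU⟩
      have hsub : f '' (derivSeq f p ε a ∩ U) ⊆ f '' (derivSeq f p' ε' a ∩ U) :=
        Set.image_mono (Set.inter_subset_inter_left U (ih a (Order.lt_succ a)))
      rcases hUsm with hL | hR
      · exact Or.inl (hsub.trans (hL.trans (Set.Iio_subset_Iio h1)))
      · exact Or.inr (hsub.trans (hR.trans (Set.Ioi_subset_Ioi h2)))
    · rw [derivSeq_limit f p ε h, derivSeq_limit f p' ε' h]
      exact Set.iInter_mono fun μ => ih μ.1 μ.2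

theorem exists_derivSeq_fixed (f p ε) :
    ∃ o : Ordinal.{0}, derivSeq f p ε (o + 1) = derivSeq f p ε o := by
  by_contra hc
  push_neg at hc
  have hinj : Function.Injective (derivSeq f p ε) := by
    intro a b hab
    by_contra hne
    wlog hlt : a < b generalizing a b
    · exact this hab.symm (Ne.symm hne) (lt_of_le_of_ne (not_lt.mp hlt) (Ne.symm hne))
    have h1 : derivSeq f p ε b ⊆ derivSeq f p ε (a + 1) :=
      derivSeq_anti f p ε b (a + 1) (by rw [Ordinal.add_one_eq_succ]; exact Order.succ_le_iff.mpr hlt)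
    have h2 : derivSeq f p ε (a + 1) ⊆ derivSeq f p ε a := by
      rw [derivSeq_succ]; exact Set.diff_subset
    have : derivSeq f p ε (a + 1) = derivSeq f p ε a :=
      subset_antisymm h2 (hab ▸ h1)
    exact hc a this
  exact not_injective_of_ordinal _ hinj

theorem exists_derivSeq_empty (f : Cantor → ℝ) (hf : BaireOne f) (p ε : ℚ) (hε : 0 < ε) :
    ∃ o : Ordinal.{0}, derivSeq f p ε o = ∅ := by
  obtain ⟨o, ho⟩ := exists_derivSeq_fixed f p ε
  set P : Set Cantor := derivSeq f p ε o with hP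
  refine ⟨o, ?_⟩
  by_contra hne
  rw [← Ne, ← Set.nonempty_iff_ne_empty] at hne
  -- stability
  have hdisj : P ∩ Rem f p ε P = ∅ := by
    have h' : P \ Rem f p ε P = P := by rw [← derivSeq_succ]; exact ho
    rw [sdiff_eq_self_iff_disjoint] at h'
    exact Set.disjoint_iff_inter_eq_empty.mp h'.symm
  have hstab : ∀ U : Set Cantor, IsOpen U → (U ∩ P).Nonempty →
      (∃ a ∈ P ∩ U, (p : ℝ) + (ε : ℝ) ≤ f a) ∧ (∃ b ∈ P ∩ U, f b ≤ (p : ℝ) - (ε : ℝ)) := by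
    intro U hUo ⟨x, hxU, hxP⟩
    constructor
    · by_contra hcon
      push_neg at hcon
      have : x ∈ P ∩ Rem f p ε P := by
        refine ⟨hxP, U, ⟨hUo, Or.inl ?_⟩, hxU⟩
        rintro y ⟨z, ⟨hzP, hzU⟩, rfl⟩
        exact hcon z ⟨hzP, hzU⟩
      rw [hdisj] at this; exact this
    · by_contra hcon
      push_neg at hcon
      have : x ∈ P ∩ Rem f p ε P := by
        refine ⟨hxP, U, ⟨hUo, Or.inr ?_⟩, hxU⟩
        rintro y ⟨z, ⟨hzP, hzU⟩, rfl⟩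
        exact hcon z ⟨hzP, hzU⟩
      rw [hdisj] at this; exact this
  -- Baire category argument
  obtain ⟨F, hFc, hFlim⟩ := hf
  have hPc : IsClosed P := derivSeq_isClosed f p ε o
  haveI : Nonempty P := hne.to_subtype
  haveI : CompactSpace P := isCompact_iff_compactSpace.mp hPc.isCompact
  haveI : WeaklyLocallyCompactSpace P := inferInstance
  haveI : R1Space P := inferInstance
  haveI : LocallyCompactSpace P := inferInstance
  set r : ℝ := (ε : ℝ) / 4 with hr
  have hεR : (0 : ℝ) < (ε : ℝ) := by exact_mod_cast hε
  have hrpos : 0 < r := by positivity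
  set C : ℕ → Set P := fun n => {x : P | ∀ m, n ≤ m → |F m x.1 - F n x.1| ≤ r} with hC
  have hCclosed : ∀ n, IsClosed (C n) := by
    intro n
    have : C n = ⋂ m, ⋂ (_ : n ≤ m), {x : P | |F m x.1 - F n x.1| ≤ r} := by
      ext x; simp [hC]
    rw [this]
    refine isClosed_iInter fun m => isClosed_iInter fun _ => ?_
    exact isClosed_le ((((hFc m).comp continuous_subtype_val).sub
      ((hFc n).comp continuous_subtype_val)).abs) continuous_const
  have hCunion : ⋃ n, C n = Set.univ := by
    ext x
    simp only [Set.mem_iUnion, Set.mem_univ, iff_true]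
    obtain ⟨N, hN⟩ := Metric.tendsto_atTop.mp (hFlim x.1) (r / 2) (by positivity)
    refine ⟨N, fun m hm => ?_⟩
    have h1 := hN m hm
    have h2 := hN N le_rfl
    rw [Real.dist_eq] at h1 h2
    calc |F m x.1 - F N x.1| = |(F m x.1 - f x.1) + (f x.1 - F N x.1)| := by ring_nf
      _ ≤ |F m x.1 - f x.1| + |f x.1 - F N x.1| := abs_add_le _ _
      _ ≤ r / 2 + r / 2 := by rw [abs_sub_comm (f x.1)]; exact add_le_add h1.le h2.le
      _ = r := by ring
  obtain ⟨n, x0, hx0⟩ := nonempty_interior_of_iUnion_of_closed hCclosed hCunion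
  obtain ⟨U, hUo, hUeq⟩ := isOpen_induced_iff.mp (isOpen_interior (s := C n))
  have hUC : ∀ y (hy : y ∈ P), y ∈ U → (⟨y, hy⟩ : P) ∈ C n := by
    intro y hy hyU
    have h1 : (⟨y, hy⟩ : P) ∈ Subtype.val ⁻¹' U := hyU
    rw [hUeq] at h1
    exact interior_subset h1
  have hfFn : ∀ y (hy : y ∈ P), y ∈ U → |f y - F n y| ≤ r := by
    intro y hy hyU
    have hmem := hUC y hy hyU
    have htend : Filter.Tendsto (fun m => |F m y - F n y|) Filter.atTop
        (nhds (|f y - F n y|)) :=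
      ((hFlim y).sub tendsto_const_nhds).abs
    exact le_of_tendsto htend (Filter.eventually_atTop.mpr ⟨n, fun m hm => hmem m hm⟩)
  have hx0' : x0 ∈ Subtype.val ⁻¹' U := by rw [hUeq]; exact hx0
  have hx0U : (U ∩ P).Nonempty := ⟨x0.1, hx0', x0.2⟩
  obtain ⟨⟨a, ⟨haP, haU⟩, hfa⟩, -⟩ := hstab U hUo hx0U
  have hFna : (p : ℝ) + (ε : ℝ) - 2 * r ≤ F n a - r := by
    have := hfFn a haP haU
    have := abs_sub_le_iff.mp this
    linarith [this.1, this.2]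
  set V : Set Cantor := (F n) ⁻¹' Set.Ioi (F n a - r) with hV
  have hVo : IsOpen V := IsOpen.preimage (hFc n) isOpen_Ioi
  have haV : a ∈ V := by simp [hV]; linarith
  have hWne : ((U ∩ V) ∩ P).Nonempty := ⟨a, ⟨haU, haV⟩, haP⟩
  obtain ⟨-, ⟨b, ⟨hbP, hbU, hbV⟩, hfb⟩⟩ := hstab (U ∩ V) (hUo.inter hVo) hWne
  have h1 : F n b ≤ (p : ℝ) - (ε : ℝ) + r := by
    have := abs_sub_le_iff.mp (hfFn b hbP hbU)
    linarith [this.1, this.2]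
  have h2 : F n a - r < F n b := hbV
  linarith

theorem bAlpha_le_of_empty {f p ε} {μ : Ordinal.{0}} (h : derivSeq f p ε μ = ∅) :
    bAlpha f p ε ≤ μ := csInf_le' h

theorem aux_maximal (f : Cantor → ℝ) (hf : BaireOne f) (ν : Ordinal.{0}) (p ε p' ε' : ℚ)
    (hε' : 0 < ε')
    (h1 : (p' : ℝ) + (ε' : ℝ) ≤ (p : ℝ) + (ε : ℝ))
    (h2 : (p : ℝ) - (ε : ℝ) ≤ (p' : ℝ) - (ε' : ℝ))
    (hx : bAlpha f p ε = ν + 1)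
    (hle' : bAlpha f p' ε' ≤ ν + 1)
    (A : Cantor) (hA : A ∈ derivSeq f p ε ν)
    (hfA : f A ∉ Set.Ioo ((p' : ℝ) - (ε' : ℝ)) ((p' : ℝ) + (ε' : ℝ))) :
    IsMaximalPair f ν p' ε' := by
  refine ⟨hε', ?_, ?_⟩
  · obtain ⟨μ0, hμ0⟩ := exists_derivSeq_empty f hf p' ε' hε'
    refine le_antisymm hle' (le_csInf ⟨μ0, hμ0⟩ ?_)
    intro μ hμ
    have hem : derivSeq f p ε μ = ∅ :=
      Set.subset_empty_iff.mp ((hμ : derivSeq f p' ε' μ = ∅) ▸ derivSeq_mono f h1 h2 μ)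
    have h3 := bAlpha_le_of_empty hem
    rwa [hx] at h3
  · intro hsub
    exact hfA (hsub ⟨A, derivSeq_mono f h1 h2 ν hA, rfl⟩)

/-- If `f` is Baire 1 with `|f|_α = ν + 1` a successor ordinal, then a maximal pair for
`f` exists. -/
theorem exists_maximal_pair (f : Cantor → ℝ) (hf : BaireOne f) (ν : Ordinal)
    (h : bourgainRank f = ν + 1) : ∃ p ε : ℚ, IsMaximalPair f ν p ε := by
  haveI : Nonempty (ℚ × {ε : ℚ // 0 < ε}) := ⟨(0, ⟨1, one_pos⟩)⟩
  have hle : ∀ x : ℚ × {ε : ℚ // 0 < ε}, bAlpha f x.1 x.2.1 ≤ ν + 1 := by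
    intro x
    rw [← h]
    exact le_ciSup (Ordinal.bddAbove_range _) x
  obtain ⟨⟨p, ε, hε⟩, hx⟩ : ∃ x : ℚ × {ε : ℚ // 0 < ε}, bAlpha f x.1 x.2.1 = ν + 1 := by
    by_contra hc
    push_neg at hc
    have hub : ∀ x : ℚ × {ε : ℚ // 0 < ε}, bAlpha f x.1 x.2.1 ≤ ν := by
      intro x
      have h' := lt_of_le_of_ne (hle x) (hc x)
      rw [Ordinal.add_one_eq_succ] at h'
      exact Order.lt_succ_iff.mp h'
    have hub2 : bourgainRank f ≤ ν := ciSup_le' hub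
    rw [h, Ordinal.add_one_eq_succ] at hub2
    exact absurd (Order.succ_le_iff.mp hub2) (lt_irrefl ν)
  simp only at hx
  have hεR : (0 : ℝ) < (ε : ℝ) := by exact_mod_cast hε
  by_cases hcase : f '' derivSeq f p ε ν ⊆ Set.Ioo ((p : ℝ) - (ε : ℝ)) ((p : ℝ) + (ε : ℝ))
  · -- need to move to a subinterval
    have hνne : (derivSeq f p ε ν).Nonempty := by
      rw [Set.nonempty_iff_ne_empty]
      intro he
      have h3 := bAlpha_le_of_empty he
      rw [hx, Ordinal.add_one_eq_succ] at h3
      exact absurd (Order.succ_le_iff.mp h3) (lt_irrefl ν)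
    obtain ⟨A, hA⟩ := hνne
    have hfA : f A ∈ Set.Ioo ((p : ℝ) - (ε : ℝ)) ((p : ℝ) + (ε : ℝ)) := hcase ⟨A, hA, rfl⟩
    by_cases hside : (p : ℝ) ≤ f A
    · refine ⟨p - ε / 2, ε / 4, aux_maximal f hf ν p ε _ _ (by positivity)
        (by push_cast; linarith) (by push_cast; linarith) hx
        (hle ⟨p - ε / 2, ⟨ε / 4, by positivity⟩⟩) A hA ?_⟩
      simp only [Set.mem_Ioo, not_and, not_lt]
      intro _
      push_cast
      linarith
    · push_neg at hside
      refine ⟨p + ε / 2, ε / 4, aux_maximal f hf ν p ε _ _ (by positivity)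
        (by push_cast; linarith) (by push_cast; linarith) hx
        (hle ⟨p + ε / 2, ⟨ε / 4, by positivity⟩⟩) A hA ?_⟩
      simp only [Set.mem_Ioo, not_and, not_lt]
      intro hcon
      push_cast at hcon ⊢
      linarith
  · exact ⟨p, ε, hε, hx, hcase⟩
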